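/- Let d ≥ 1, f : ℝ^d → ℝ, x₀ ∈ ℝ^d, r > 0, and M > 1. Suppose P : ℝ^d → ℝ is an affine function with |∇P| > 1 such that |f(x) − P(x)| ≤ M·r for all x in the open ball B(x₀, 2r) ⊆ ℝ^d. Set r' = min(r/2, M·r/|∇P|), u = ∇P/|∇P|, x₀' = x₀ + 2r'·u, σ = 1 if f(x₀) ≥ f(x₀') and σ = −1 otherwise, z₀ = (x₀, f(x₀)) ∈ ℝ^{d+1}, and z₀'' = (x₀ + 2r'·u, f(x₀) + σ·(3M+1)·r) ∈ ℝ^{d+1}. Then |z₀ − z₀''| ≤ (5M+1)·r and the open ball B(z₀'', r') in ℝ^{d+1} is disjoint from the graph E = {(x, f(x)) : x ∈ ℝ^d} of f. -/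

import Mathlib

open Metric

lemma prodL2_dist_bounds {α β : Type*} [SeminormedAddCommGroup α] [SeminormedAddCommGroup β]
    (x y : WithLp 2 (α × β)) :
    dist x.fst y.fst ≤ dist x y ∧ dist x.snd y.snd ≤ dist x y ∧
      dist x y ≤ dist x.fst y.fst + dist x.snd y.snd := by
  set A := dist x.fst y.fst with hA
  set B := dist x.snd y.snd with hB
  have hA0 : 0 ≤ A := dist_nonneg
  have hB0 : 0 ≤ B := dist_nonneg
  rw [WithLp.prod_dist_eq_of_L2]
  refine ⟨?_, ?_, ?_⟩
  · calc A = Real.sqrt (A ^ 2) := (Real.sqrt_sq hA0).symm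
    _ ≤ Real.sqrt (A ^ 2 + B ^ 2) := Real.sqrt_le_sqrt (by nlinarith)
  · calc B = Real.sqrt (B ^ 2) := (Real.sqrt_sq hB0).symm
    _ ≤ Real.sqrt (A ^ 2 + B ^ 2) := Real.sqrt_le_sqrt (by nlinarith)
  · calc Real.sqrt (A ^ 2 + B ^ 2) ≤ Real.sqrt ((A + B) ^ 2) :=
      Real.sqrt_le_sqrt (by nlinarith)
    _ = A + B := Real.sqrt_sq (by positivity)

theorem affine_approx_large_gradient_offset_ball
    (d : ℕ) (hd : 1 ≤ d)
    (f : EuclideanSpace ℝ (Fin d) → ℝ)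
    (x₀ : EuclideanSpace ℝ (Fin d)) (r : ℝ) (hr : 0 < r)
    (M : ℝ) (hM : 1 < M)
    (a : EuclideanSpace ℝ (Fin d)) (b : ℝ)
    (ha : 1 < ‖a‖)
    (hApprox : ∀ x ∈ ball x₀ (2 * r), |f x - ((inner ℝ a x : ℝ) + b)| ≤ M * r)
    (r' : ℝ) (hr' : r' = min (r / 2) (M * r / ‖a‖))
    (u : EuclideanSpace ℝ (Fin d)) (hu : u = ‖a‖⁻¹ • a)
    (x₀' : EuclideanSpace ℝ (Fin d)) (hx₀' : x₀' = x₀ + (2 * r') • u)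
    (σ : ℝ) (hσ : σ = if f x₀' ≤ f x₀ then 1 else -1)
    (z₀ z₀'' : WithLp 2 (EuclideanSpace ℝ (Fin d) × ℝ))
    (hz₀ : z₀ = (WithLp.equiv 2 _).symm (x₀, f x₀))
    (hz₀'' : z₀'' = (WithLp.equiv 2 _).symm (x₀ + (2 * r') • u,
      f x₀ + σ * ((3 * M + 1) * r))) :
    dist z₀ z₀'' ≤ (5 * M + 1) * r ∧
    ball z₀'' r' ∩
      {z : WithLp 2 (EuclideanSpace ℝ (Fin d) × ℝ) |
        ∃ x : EuclideanSpace ℝ (Fin d), z = (WithLp.equiv 2 _).symm (x, f x)} = ∅ := by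
  have hA0 : (0 : ℝ) < ‖a‖ := lt_trans one_pos ha
  have hr'pos : 0 < r' := by
    rw [hr']
    exact lt_min (by positivity) (by positivity)
  have hr'half : r' ≤ r / 2 := hr' ▸ min_le_left _ _
  have har' : ‖a‖ * r' ≤ M * r := by
    have h1 : r' ≤ M * r / ‖a‖ := hr' ▸ min_le_right _ _
    rw [le_div_iff₀ hA0] at h1
    linarith [h1]
  have hu1 : ‖u‖ = 1 := by
    rw [hu, norm_smul, norm_inv, norm_norm, inv_mul_cancel₀ (ne_of_gt hA0)]
  have hdist1 : dist x₀ (x₀ + (2 * r') • u) = 2 * r' := by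
    rw [dist_self_add_right, norm_smul, hu1, mul_one, Real.norm_eq_abs,
      abs_of_pos (by linarith)]
  have habsσ : |σ| = 1 := by
    rw [hσ]; split_ifs <;> norm_num
  have hd2 : dist (f x₀) (f x₀ + σ * ((3 * M + 1) * r)) = (3 * M + 1) * r := by
    rw [Real.dist_eq]
    have h : f x₀ - (f x₀ + σ * ((3 * M + 1) * r)) = -(σ * ((3 * M + 1) * r)) := by ring
    rw [h, abs_neg, abs_mul, habsσ, one_mul, abs_of_pos (by nlinarith)]
  constructor
  · -- distance bound
    rw [hz₀, hz₀'']
    obtain ⟨-, -, h3⟩ := prodL2_dist_bounds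
      ((WithLp.equiv 2 (EuclideanSpace ℝ (Fin d) × ℝ)).symm (x₀, f x₀))
      ((WithLp.equiv 2 (EuclideanSpace ℝ (Fin d) × ℝ)).symm
        (x₀ + (2 * r') • u, f x₀ + σ * ((3 * M + 1) * r)))
    simp only [WithLp.equiv_symm_apply, WithLp.toLp_fst, WithLp.toLp_snd] at h3 ⊢
    rw [hdist1, hd2] at h3
    nlinarith
  · -- disjointness
    ext z
    simp only [Set.mem_inter_iff, mem_ball, Set.mem_setOf_eq, Set.mem_empty_iff_false,
      iff_false, not_and]
    rintro hzball ⟨x, rfl⟩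
    obtain ⟨h1, h2, -⟩ := prodL2_dist_bounds ((WithLp.equiv 2 _).symm (x, f x)) z₀''
    rw [hz₀''] at h1 h2
    simp only [WithLp.equiv_symm_apply, WithLp.toLp_fst, WithLp.toLp_snd] at h1 h2
    rw [hz₀''] at hzball
    have hdx : dist x (x₀ + (2 * r') • u) < r' := lt_of_le_of_lt h1 hzball
    have hdy : |f x - (f x₀ + σ * ((3 * M + 1) * r))| < r' := by
      rw [← Real.dist_eq]; exact lt_of_le_of_lt h2 hzball
    -- x ∈ B(x₀, 2r)
    have hxball : x ∈ ball x₀ (2 * r) := by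
      rw [mem_ball]
      calc dist x x₀ ≤ dist x (x₀ + (2 * r') • u) + dist (x₀ + (2 * r') • u) x₀ :=
        dist_triangle _ _ _
      _ < r' + 2 * r' := by rw [dist_comm _ x₀, hdist1]; linarith
      _ < 2 * r := by linarith
    have hx₀'ball : x₀' ∈ ball x₀ (2 * r) := by
      rw [mem_ball, hx₀', dist_comm, hdist1]; linarith
    have hx₀ball : x₀ ∈ ball x₀ (2 * r) := by
      rw [mem_ball, dist_self]; positivity
    have hfx := abs_le.mp (hApprox x hxball)
    have hfx₀ := abs_le.mp (hApprox x₀ hx₀ball)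
    have hfx₀' := abs_le.mp (hApprox x₀' hx₀'ball)
    -- inner product estimate
    have hinner : |(inner ℝ a x : ℝ) - (inner ℝ a x₀' : ℝ)| ≤ M * r := by
      rw [← inner_sub_right]
      calc |(inner ℝ a (x - x₀') : ℝ)| ≤ ‖a‖ * ‖x - x₀'‖ := abs_real_inner_le_norm a _
      _ = ‖a‖ * dist x x₀' := by rw [dist_eq_norm]
      _ ≤ ‖a‖ * r' := by
          apply mul_le_mul_of_nonneg_left _ (le_of_lt hA0)
          rw [hx₀']; exact le_of_lt hdx
      _ ≤ M * r := har'
    have hinner' := abs_le.mp hinner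
    have hdy' := abs_lt.mp hdy
    rw [hσ] at hdy'
    split_ifs at hdy' with hcase
    · -- σ = 1 : f x₀' ≤ f x₀
      obtain ⟨hl, hu'⟩ := hdy'
      linarith [hfx.2, hfx₀'.1, hinner'.2, hcase, hr'half, hr]
    · -- σ = -1 : f x₀ < f x₀'
      push_neg at hcase
      obtain ⟨hl, hu'⟩ := hdy'
      linarith [hfx.1, hfx₀'.2, hinner'.1, hcase, hr'half, hr]
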